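/- Let k be an element of a group R lying in Z(H) ∩ K but not in Z(R), where 1 < K ⊴ H < R and S ⊆ R satisfies K(S\H) = S\H = (S\H)K. Then conjugation by k is a nontrivial automorphism of R fixing S setwise (it fixes H pointwise and maps each element s ∈ S\H into KsK ⊆ S). -/
import Mathlib


open scoped Pointwise

/-- if `k ∈ (Z(H) ∩ K) \ Z(R)`, conjugation by `k` is a nontrivial
automorphism of `R` fixing `S` setwise; it fixes `H` pointwise and maps each
`s ∈ S \ H` into `KsK ⊆ S`. -/
theorem stmt4 {R : Type*} [Group R] (S : Set R) (K H : Subgroup R) (k : R)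
    (hK : ⊥ < K) (hKH : K ≤ H)
    (hnorm : ∀ h ∈ H, ∀ k' ∈ K, h * k' * h⁻¹ ∈ K)
    (hH : H < ⊤)
    (h1 : (K : Set R) * (S \ (H : Set R)) = S \ (H : Set R))
    (h2 : (S \ (H : Set R)) * (K : Set R) = S \ (H : Set R))
    (hkK : k ∈ K) (hkZH : ∀ h ∈ H, k * h = h * k)
    (hkZR : k ∉ Subgroup.center R) :
    ∃ φ : MulAut R,
      (∀ r_ : R, φ r_ = k⁻¹ * r_ * k) ∧
      φ ≠ 1 ∧
      φ '' S = S ∧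
      (∀ h ∈ H, φ h = h) ∧
      (∀ s ∈ S \ (H : Set R),
        φ s ∈ (K : Set R) * {s} * (K : Set R) ∧ (K : Set R) * {s} * (K : Set R) ⊆ S) := by
  refine ⟨MulAut.conj k⁻¹, fun r => by simp [MulAut.conj], ?_, ?_, ?_, ?_⟩
  · intro hcontra
    apply hkZR
    rw [Subgroup.mem_center_iff]
    intro g
    have := congrArg (fun ψ : MulAut R => ψ g) hcontra
    simp [MulAut.conj] at this
    have h3 : k⁻¹ * g * k = g := by simpa [zpow_neg, zpow_one] using this
    calc g * k = k * (k⁻¹ * g * k) := by group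
      _ = k * g := by rw [h3]
  · have key : ∀ s ∈ S \ (H : Set R), ∀ a ∈ K, ∀ b ∈ K, a * s * b ∈ S \ (H : Set R) := by
      intro s hs a ha b hb
      have h1' : a * s ∈ S \ (H : Set R) := by
        rw [← h1]; exact Set.mul_mem_mul ha hs
      rw [← h2]; exact Set.mul_mem_mul h1' hb
    ext x
    simp only [Set.mem_image]
    constructor
    · rintro ⟨s, hs, rfl⟩
      by_cases hsH : s ∈ (H : Set R)
      · have : k⁻¹ * s * k = s := by
          have := hkZH s hsH
          group
          rw [mul_assoc, ← this]; group
        simpa [MulAut.conj, this] using hs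
      · have := key s ⟨hs, hsH⟩ k⁻¹ (inv_mem hkK) k hkK
        simpa [MulAut.conj] using this.1
    · intro hx
      refine ⟨k * x * k⁻¹, ?_, by simp [MulAut.conj]; group⟩
      by_cases hxH : x ∈ (H : Set R)
      · have : k * x * k⁻¹ = x := by
          have := hkZH x hxH
          rw [this]; group
        rwa [this]
      · exact (key x ⟨hx, hxH⟩ k hkK k⁻¹ (inv_mem hkK)).1
  · intro h hh
    have := hkZH h hh
    simp only [MulAut.conj_apply, inv_inv]
    rw [mul_assoc, ← this]; group
  · intro s hs
    have key : ∀ a ∈ K, ∀ b ∈ K, a * s * b ∈ S \ (H : Set R) := by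
      intro a ha b hb
      have h1' : a * s ∈ S \ (H : Set R) := by
        rw [← h1]; exact Set.mul_mem_mul ha hs
      rw [← h2]; exact Set.mul_mem_mul h1' hb
    constructor
    · have : k⁻¹ * s * k ∈ (K : Set R) * {s} * (K : Set R) :=
        Set.mul_mem_mul (Set.mul_mem_mul (inv_mem hkK) rfl) hkK
      simpa [MulAut.conj] using this
    · rintro x hx
      obtain ⟨y, ⟨a, ha, s', hs', rfl⟩, b, hb, rfl⟩ := hx
      obtain rfl : s' = s := hs'
      exact (key a ha b hb).1
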